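/- Let A be an associative ℂ-algebra generated by elements θ¹, θ², θ³ satisfying the ternary relations θⁱθʲθᵏ = q·θʲθᵏθⁱ for all i, j, k ∈ {1,2,3}, where q = exp(2πi/3). Then any product of four generators vanishes: θⁱθʲθᵏθˡ = 0 for all i, j, k, l. -/

import Mathlib

noncomputable def q : ℂ := Complex.exp (2 * Real.pi * Complex.I / 3)

lemma q_pow_four_ne_one : q ^ 4 ≠ 1 := by
  unfold q
  rw [← Complex.exp_nat_mul]
  intro hone
  rw [Complex.exp_eq_one_iff] at hone
  obtain ⟨n, hn⟩ := hone
  have hpi : (Real.pi : ℂ) ≠ 0 := by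
    exact_mod_cast Real.pi_ne_zero
  have hI := Complex.I_ne_zero
  have : (4 : ℂ) = 3 * n := by
    field_simp at hn
    have h2 : (4 : ℂ) * (2 * Real.pi * Complex.I) = (3 * n) * (2 * Real.pi * Complex.I) := by
      linear_combination (2 * (Real.pi : ℂ) * Complex.I) * hn
    have hne : (2 * (Real.pi : ℂ) * Complex.I) ≠ 0 := by
      exact mul_ne_zero (mul_ne_zero two_ne_zero hpi) hI
    exact mul_right_cancel₀ hne h2
  have hn4 : (3 : ℤ) * n = 4 := by exact_mod_cast this.symm
  omega

theorem stmt3 {A : Type*} [Ring A] [Algebra ℂ A] (θ : Fin 3 → A)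
    (h : ∀ i j k : Fin 3, θ i * θ j * θ k = q • (θ j * θ k * θ i)) :
    ∀ i j k l : Fin 3, θ i * θ j * θ k * θ l = 0 := by
  intro i j k l
  have e1 : θ i * θ j * θ k * θ l = q • (θ j * θ k * θ i * θ l) := by
    rw [h i j k, smul_mul_assoc]
  have e2 : θ j * θ k * θ i * θ l = q • (θ j * θ i * θ l * θ k) := by
    calc θ j * θ k * θ i * θ l = θ j * (θ k * θ i * θ l) := by
          rw [mul_assoc, mul_assoc, mul_assoc]
      _ = θ j * (q • (θ i * θ l * θ k)) := by rw [h k i l]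
      _ = q • (θ j * θ i * θ l * θ k) := by
          rw [mul_smul_comm, mul_assoc, mul_assoc, mul_assoc]
  have e3 : θ j * θ i * θ l * θ k = q • (θ i * θ l * θ j * θ k) := by
    rw [h j i l, smul_mul_assoc]
  have e4 : θ i * θ l * θ j * θ k = q • (θ i * θ j * θ k * θ l) := by
    calc θ i * θ l * θ j * θ k = θ i * (θ l * θ j * θ k) := by
          rw [mul_assoc, mul_assoc, mul_assoc]
      _ = θ i * (q • (θ j * θ k * θ l)) := by rw [h l j k]
      _ = q • (θ i * θ j * θ k * θ l) := by
          rw [mul_smul_comm, mul_assoc, mul_assoc, mul_assoc]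
  have key : θ i * θ j * θ k * θ l = (q ^ 4) • (θ i * θ j * θ k * θ l) := by
    calc θ i * θ j * θ k * θ l = q • (θ j * θ k * θ i * θ l) := e1
      _ = q • (q • (θ j * θ i * θ l * θ k)) := by rw [e2]
      _ = q • (q • (q • (θ i * θ l * θ j * θ k))) := by rw [e3]
      _ = q • (q • (q • (q • (θ i * θ j * θ k * θ l)))) := by rw [e4]
      _ = (q ^ 4) • (θ i * θ j * θ k * θ l) := by
          rw [smul_smul, smul_smul, smul_smul]; ring_nf
  have hsub : (1 - q ^ 4) • (θ i * θ j * θ k * θ l) = 0 := by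
    rw [sub_smul, one_smul, ← key, sub_self]
  have hne : (1 : ℂ) - q ^ 4 ≠ 0 := by
    intro hc
    exact q_pow_four_ne_one (by linear_combination -hc)
  calc θ i * θ j * θ k * θ l
      = (1 - q ^ 4)⁻¹ • ((1 - q ^ 4) • (θ i * θ j * θ k * θ l)) :=
        (inv_smul_smul₀ hne _).symm
    _ = 0 := by rw [hsub, smul_zero]
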